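/- (Effective Borel–Cantelli for ML-randomness) Let P be a computable probability measure on {0,1}^ℕ and let U ⊆ ℕ × S be a recursively enumerable set of pairs such that P(Ũ_n) < 2^{-n} for every n, where Ũ_n is the union of cylinders Δ(s) over s with (n,s) ∈ U. Then every sequence that is Martin-Löf random with respect to P lies in only finitely many of the sets Ũ_n; equivalently, the ML-random sequences are contained in the complement of limsup_n Ũ_n. -/

import Mathlib

open MeasureTheory Filter

/-- Cylinder set of infinite binary sequences extending the finite string `s`. -/
def cyl (s : List Bool) : Set (ℕ → Bool) := {x | ∀ i : Fin s.length, x i.val = s.get i}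

/-- The length-`n` prefix of the infinite sequence `y`. -/
def pre (y : ℕ → Bool) (n : ℕ) : List Bool := List.ofFn (fun i : Fin n => y i.val)

/-- `select x y` is the subsequence `x/y` of `x` at positions `i` with `y i = true`. -/
noncomputable def select (x y : ℕ → Bool) : ℕ → Bool :=
  fun n => x (Nat.nth (fun i => y i = true) n)

/-- Subsequence of a finite string `s` at the positions where `t` is `true`. -/
def selStr (s t : List Bool) : List Bool :=
  ((List.zip s t).filter (fun p => p.2)).map Prod.fst

/-- `s` is a prefix of the infinite sequence `f`. -/
def IsPrefixSeq (s : List Bool) (f : ℕ → Bool) : Prop :=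
  ∀ i : Fin s.length, f i.val = s.get i

/-- Open set determined by level `n` of a test. -/
def openU (U : ℕ → Set (List Bool)) (n : ℕ) : Set (ℕ → Bool) := ⋃ s ∈ U n, cyl s

/-- Martin-Löf test with respect to the measure `μ`. -/
def MLTest (μ : Measure (ℕ → Bool)) (U : ℕ → Set (List Bool)) : Prop :=
  REPred (fun p : ℕ × List Bool => p.2 ∈ U p.1) ∧
  (∀ n, openU U (n + 1) ⊆ openU U n) ∧
  (∀ n, μ (openU U n) < (2 : ENNReal)⁻¹ ^ n)

/-- `x` is Martin-Löf random w.r.t. `μ`: it passes every ML test. -/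
def MLRandom (μ : Measure (ℕ → Bool)) (x : ℕ → Bool) : Prop :=
  ∀ U : ℕ → Set (List Bool), MLTest μ U → ∃ n, x ∉ openU U n

/-- `μ` is a computable measure. -/
def ComputableMeasure (μ : Measure (ℕ → Bool)) : Prop :=
  ∃ A : List Bool → ℕ → ℚ, Computable₂ A ∧
    ∀ s k, |(μ (cyl s)).toReal - (A s k : ℝ)| < 1 / (k + 1)

/-- The uniform (fair-coin) measure, characterized on cylinders. -/
def IsUniform (μ : Measure (ℕ → Bool)) : Prop :=
  ∀ s : List Bool, μ (cyl s) = (2 : ENNReal)⁻¹ ^ s.length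


open Nat.Partrec (Code)
open Nat.Partrec.Code in
theorem re_exists {α} [Primcodable α] {p : α × ℕ → Prop} (hp : REPred p) :
    REPred fun a => ∃ m, p (a, m) := by
  unfold REPred at hp
  obtain ⟨c, hc⟩ := exists_code.1 hp
  have hgdom : ∀ q : α × ℕ, (eval c (Encodable.encode q)).Dom ↔ p q := by
    intro q
    have : eval c (Encodable.encode q) =
        (Part.assert (p q) fun _ => Part.some ()).map Encodable.encode := by
      rw [hc]; simp
    rw [this]
    simp [Part.assert]
  have hf : Computable₂ fun (a : α) (k : ℕ) =>
      (evaln k.unpair.2 c (Encodable.encode (a, k.unpair.1))).map fun _ => () := by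
    apply Computable.option_map
    · exact (primrec_evaln.to_comp).comp
        (((Computable.snd.comp (Primrec.to_comp (Primrec.unpair.comp Primrec.snd))).pair
          (Computable.const c)).pair
          (Computable.encode.comp (Computable.fst.pair
            ((Computable.fst.comp (Primrec.to_comp (Primrec.unpair.comp Primrec.snd)))))))
    · exact Computable.const ()
  have h := (Partrec.rfindOpt hf).dom_re
  apply h.of_eq
  intro a
  rw [Nat.rfindOpt_dom]
  constructor
  · rintro ⟨k, u, hu⟩
    simp only [Option.mem_def, Option.map_eq_some_iff] at hu
    obtain ⟨v, hv, -⟩ := hu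
    exact ⟨k.unpair.1, (hgdom _).1 (Part.dom_iff_mem.2 ⟨v, evaln_sound hv⟩)⟩
  · rintro ⟨m, hm⟩
    obtain ⟨v, hv⟩ := Part.dom_iff_mem.1 ((hgdom (a, m)).2 hm)
    obtain ⟨t, ht⟩ := evaln_complete.1 hv
    exact ⟨Nat.pair m t, (), by simp [Nat.unpair_pair, ht]; exact ⟨v, ht⟩⟩

theorem stmt3 (μ : Measure (ℕ → Bool)) [IsProbabilityMeasure μ]
    (hμ : ComputableMeasure μ) (U : ℕ → Set (List Bool))
    (hre : REPred (fun p : ℕ × List Bool => p.2 ∈ U p.1))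
    (hμU : ∀ n, μ (openU U n) < (2 : ENNReal)⁻¹ ^ n)
    (x : ℕ → Bool) (hx : MLRandom μ x) :
    {n | x ∈ openU U n}.Finite := by
  set V : ℕ → Set (List Bool) := fun n => {s | ∃ m, s ∈ U (n + 2 + m)} with hV
  have hopenV : ∀ n, openU V n = ⋃ m, openU U (n + 2 + m) := by
    intro n
    ext y
    simp only [openU, Set.mem_iUnion, hV, Set.mem_setOf_eq]
    constructor
    · rintro ⟨s, ⟨m, hs⟩, hy⟩; exact ⟨m, s, hs, hy⟩
    · rintro ⟨m, s, hs, hy⟩; exact ⟨s, ⟨m, hs⟩, hy⟩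
  have hmeas : ∀ n, μ (openU V n) < (2 : ENNReal)⁻¹ ^ n := by
    intro n
    rw [hopenV]
    calc μ (⋃ m, openU U (n + 2 + m)) ≤ ∑' m, μ (openU U (n + 2 + m)) :=
          measure_iUnion_le _
      _ ≤ ∑' m : ℕ, (2 : ENNReal)⁻¹ ^ (n + 2 + m) :=
          ENNReal.tsum_le_tsum fun m => (hμU _).le
      _ = (2 : ENNReal)⁻¹ ^ (n + 2) * ∑' m : ℕ, (2 : ENNReal)⁻¹ ^ m := by
          simp_rw [pow_add]; rw [ENNReal.tsum_mul_left]
      _ = (2 : ENNReal)⁻¹ ^ (n + 2) * 2 := by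
          rw [ENNReal.tsum_geometric]
          norm_num
      _ < (2 : ENNReal)⁻¹ ^ n := by
          rw [pow_add, mul_assoc, show ((2 : ENNReal)⁻¹) ^ 2 * 2 = 2⁻¹ by
            rw [sq, mul_assoc, ENNReal.inv_mul_cancel (by norm_num) (by norm_num), mul_one]]
          nth_rewrite 2 [← mul_one ((2 : ENNReal)⁻¹ ^ n)]
          exact (ENNReal.mul_lt_mul_iff_right
            (pow_ne_zero n (by norm_num)) (ENNReal.pow_ne_top (by norm_num))).2
            (by norm_num)
  have hmono : ∀ n, openU V (n + 1) ⊆ openU V n := by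
    intro n y hy
    rw [hopenV] at hy ⊢
    obtain ⟨m, hm⟩ := Set.mem_iUnion.1 hy
    refine Set.mem_iUnion.2 ⟨m + 1, ?_⟩
    have h : n + 2 + (m + 1) = n + 1 + 2 + m := by omega
    rw [h]; exact hm
  have hreV : REPred (fun p : ℕ × List Bool => p.2 ∈ V p.1) := by
    have hcomp : Computable (fun q : (ℕ × List Bool) × ℕ => (q.1.1 + 2 + q.2, q.1.2)) := by
      apply Computable.pair
      · exact (Primrec.to_comp (Primrec.nat_add.comp
          (Primrec.nat_add.comp (Primrec.fst.comp Primrec.fst) (Primrec.const 2))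
          Primrec.snd))
      · exact Computable.snd.comp Computable.fst
    have h1 : REPred (fun q : (ℕ × List Bool) × ℕ => q.1.2 ∈ U (q.1.1 + 2 + q.2)) :=
      hre.comp hcomp
    exact (re_exists h1).of_eq fun p => Iff.rfl
  obtain ⟨n, hn⟩ := hx V ⟨hreV, hmono, hmeas⟩
  apply Set.Finite.subset (Set.finite_Iio (n + 2))
  intro k hk
  by_contra hlt
  simp only [Set.mem_Iio, not_lt] at hlt
  apply hn
  rw [hopenV]
  exact Set.mem_iUnion.2 ⟨k - (n + 2), by
    have : n + 2 + (k - (n + 2)) = k := by omega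
    rw [this]; exact hk⟩
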